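/- D_j = 0 for every j with k ≤ j ≤ n−1. That is, the last n−k components of the inverse GFFT of ḡ (equivalently, the last n−k diagonal entries of D) all vanish. -/
import Mathlib


/-- The last `n-k` components of the inverse GFFT of `ḡ` (the last `n-k`
diagonal entries of `D`) all vanish. -/
theorem stmt_5 (F : Type*) [Field F] (n k : ℕ) (b : ℤ)
    (hn : 1 ≤ n) (hk : 1 ≤ k) (hkn : k < n)
    (α : F) (hα : IsPrimitiveRoot α n) :
    let g : Polynomial F :=
      ∏ t ∈ Finset.range (n - k), (Polynomial.X - Polynomial.C (α ^ (b + (t : ℤ))))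
    let gb : Fin n → F := fun i => g.coeff i * α ^ ((b - 1) * ((i : ℕ) : ℤ))
    let D : Fin n → F :=
      fun j => ∑ i : Fin n, gb i * α ^ (-(((i : ℕ) : ℤ) * ((j : ℕ) : ℤ)))
    ∀ j : Fin n, k ≤ (j : ℕ) → D j = 0 := by
  intro g gb D j hj
  have hα0 : α ≠ 0 := hα.ne_zero (by omega)
  set β : F := α ^ (b - 1 - (j : ℕ)) with hβ
  -- each summand equals coeff i * β^i
  have hterm : ∀ i : Fin n,
      gb i * α ^ (-(((i : ℕ) : ℤ) * ((j : ℕ) : ℤ))) = g.coeff i * β ^ (i : ℕ) := by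
    intro i
    simp only [gb, hβ, mul_assoc]
    congr 1
    rw [← zpow_natCast (α ^ (b - 1 - (j : ℕ))) (i : ℕ), ← zpow_mul, ← zpow_add₀ hα0]
    congr 1
    ring
  -- natDegree of g
  have hdeg : g.natDegree = n - k := by
    have : g.natDegree = ∑ t ∈ Finset.range (n - k),
        (Polynomial.X - Polynomial.C (α ^ (b + (t : ℤ)))).natDegree := by
      apply Polynomial.natDegree_prod
      intro t _
      exact Polynomial.X_sub_C_ne_zero _
    simp [this, Polynomial.natDegree_X_sub_C]
  -- sum equals evaluation
  have hsum : D j = g.eval β := by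
    simp only [D]
    rw [Finset.sum_congr rfl (fun i _ => hterm i),
      Polynomial.eval_eq_sum_range' (by omega : g.natDegree < n),
      ← Fin.sum_univ_eq_sum_range (fun i => g.coeff i * β ^ i) n]
  -- β is a root: β = α^(b + (n-1-j))
  rw [hsum]
  have ht : (n : ℤ) - 1 - (j : ℕ) = ((n - 1 - (j : ℕ) : ℕ) : ℤ) := by
    have := j.isLt
    omega
  have hβroot : β = α ^ (b + ((n - 1 - (j : ℕ) : ℕ) : ℤ)) := by
    rw [hβ, ← ht]
    have : b + ((n : ℤ) - 1 - (j : ℕ)) = (b - 1 - (j : ℕ)) + (n : ℤ) := by ring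
    rw [this, zpow_add₀ hα0]
    rw [zpow_natCast, hα.pow_eq_one, mul_one]
  have hmem : (n - 1 - (j : ℕ) : ℕ) ∈ Finset.range (n - k) := by
    have := j.isLt
    simp only [Finset.mem_range]
    omega
  simp only [g, Polynomial.eval_prod]
  apply Finset.prod_eq_zero hmem
  simp [hβroot]
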